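/- Define the K-theoretic Segre series of n variables x_1, ..., x_n by G(u) := (1/(1 - βu^{-1})) ∏_{j=1}^{n} (1 - βx_j)/(1 - x_j u), a formal Laurent series ∑_{m ∈ ℤ} G_m u^m with coefficients G_m ∈ ℤ[β][x_1,...,x_n], where 1/(1 - βu^{-1}) is expanded as ∑_{k≥0} β^k u^{-k}. Then for every integer a ≥ 0, one has G_{-a} = β^a. -/

import Mathlib

noncomputable section

open MvPolynomial

/-- The coefficient ring `ℤ[β]`. -/
abbrev Rβ : Type := Polynomial ℤ
abbrev β : Rβ := Polynomial.X

/-- Complete homogeneous symmetric polynomial `h_d(x₁,…,xₙ)` over `ℤ[β]`: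
the coefficient of `u^d` in `∏ⱼ 1/(1 - xⱼu) = ∏ⱼ ∑ₖ xⱼ^k u^k`. -/
def hh (n d : ℕ) : MvPolynomial (Fin n) Rβ := hsymm (Fin n) Rβ d

/-- `∏ⱼ (1 - βxⱼ)`. -/
def cβ (n : ℕ) : MvPolynomial (Fin n) Rβ :=
  ∏ j : Fin n, (1 - MvPolynomial.C β * MvPolynomial.X j)

/-- `b_l`: the coefficient of `u^l` in `∏ⱼ (1-βxⱼ)/(1-xⱼu)`
(expanding `1/(1-xⱼu) = ∑ₖ xⱼ^k u^k`); zero for `l < 0`. -/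
def bβ (n : ℕ) (l : ℤ) : MvPolynomial (Fin n) Rβ :=
  if l < 0 then 0 else cβ n * hh n l.toNat

open Finset

/-- `G_m`: the coefficient of `u^m` in the Laurent series
`G(u) = (1/(1-βu⁻¹)) ∏ⱼ (1-βxⱼ)/(1-xⱼu)`, where `1/(1-βu⁻¹) = ∑ₖ β^k u^{-k}`;
thus `G_m = ∑_{k≥0} β^k b_{m+k}`, a well-defined formal power series in `x`
(for each monomial `x^d` only the finitely many `k ≤ |d| + |m|` contribute,
since `b_{m+k}` has all terms of total degree `≥ m+k`). -/

def Gcoeff (n : ℕ) (m : ℤ) : MvPowerSeries (Fin n) Rβ :=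
  fun d => ∑ k ∈ Finset.range (d.sum (fun _ e => e) + m.natAbs + 1),
    β ^ k * MvPolynomial.coeff d (bβ n (m + k))


open Finset

lemma sum_add_fs {α : Type*} (e f : α →₀ ℕ) :
    ((e + f).sum fun _ x => x) = (e.sum fun _ x => x) + (f.sum fun _ x => x) :=
  Finsupp.sum_add_index' (fun _ => rfl) (fun _ _ _ => rfl)

lemma multiset_prod_X {σ : Type*} [DecidableEq σ] {R : Type*} [CommSemiring R] (m : Multiset σ) :
    ((m.map (X : σ → MvPolynomial σ R)).prod) = monomial m.toFinsupp 1 := by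
  induction m using Multiset.induction_on with
  | empty => simp [monomial_zero', C_1]
  | cons a s ih =>
      rw [Multiset.map_cons, Multiset.prod_cons, ih, ← Multiset.singleton_add, map_add,
        Multiset.toFinsupp_singleton, X, monomial_mul, one_mul]

lemma coeff_hsymm {σ : Type*} [Fintype σ] [DecidableEq σ] {R : Type*} [CommSemiring R]
    (k : ℕ) (d : σ →₀ ℕ) :
    coeff d (hsymm σ R k) = if (d.sum fun _ e => e) = k then 1 else 0 := by
  have key : ∀ s : Sym σ k, s.1.toFinsupp = d → (d.sum fun _ e => e) = k := by
    intro s hs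
    have := Finsupp.card_toMultiset d
    rw [← hs, Multiset.toFinsupp_toMultiset] at this
    rw [show (d.sum fun _ e => e) = d.sum fun _ => id from rfl, ← Finsupp.card_toMultiset, ← hs,
      Multiset.toFinsupp_toMultiset, s.2]
  rw [hsymm]
  simp_rw [coeff_sum, multiset_prod_X, coeff_monomial]
  split_ifs with h
  · set s₀ : Sym σ k := ⟨Finsupp.toMultiset d, by
      rw [Finsupp.card_toMultiset]; exact h⟩ with hs₀
    rw [Finset.sum_congr rfl (fun s _ => show (if s.1.toFinsupp = d then (1:R) else 0)
        = if s = s₀ then 1 else 0 by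
      congr 1
      simp only [eq_iff_iff]
      constructor
      · intro hs
        apply Sym.ext
        rw [hs₀]
        have := congrArg Finsupp.toMultiset hs
        rwa [Multiset.toFinsupp_toMultiset] at this
      · intro hs
        rw [hs, hs₀]
        exact Finsupp.toMultiset_toFinsupp d)]
    simp
  · apply Finset.sum_eq_zero
    intro s _
    rw [if_neg (fun hs => h (key s hs))]

lemma cβ_expand (n : ℕ) :
    cβ n = ∑ S ∈ (univ : Finset (Fin n)).powerset,
      C ((-β) ^ S.card) * monomial S.val.toFinsupp 1 := by
  rw [cβ]
  have : ∀ j : Fin n, (1 - C β * X j : MvPolynomial (Fin n) Rβ)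
      = (-(C β) * X j) + 1 := by intro j; ring
  simp_rw [this]
  rw [Finset.prod_add]
  refine Finset.sum_congr rfl fun S _ => ?_
  rw [Finset.prod_const_one, mul_one, Finset.prod_mul_distrib, Finset.prod_const,
    ← map_neg C β, ← map_pow, Finset.prod_eq_multiset_prod, multiset_prod_X]

lemma inner_antidiag {α : Type*} [DecidableEq α] (d e : α →₀ ℕ) (g : (α →₀ ℕ) → Rβ) :
    ∑ p ∈ antidiagonal d, (if e = p.1 then g p.2 else 0)
      = if e ≤ d then g (d - e) else 0 := by
  by_cases h : e ≤ d
  · rw [if_pos h]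
    rw [Finset.sum_eq_single_of_mem (e, d - e)
      (mem_antidiagonal.mpr (add_tsub_cancel_of_le h))]
    · rw [if_pos rfl]
    · intro p hp hne
      rw [if_neg]
      intro hpe
      apply hne
      have h1 := mem_antidiagonal.mp hp
      have h2 : p.2 = d - e := by
        rw [← hpe] at h1
        exact eq_tsub_of_add_eq (by rw [add_comm]; exact h1)
      rw [Prod.ext_iff]
      exact ⟨hpe.symm, h2⟩
  · rw [if_neg h]
    apply Finset.sum_eq_zero
    intro p hp
    rw [if_neg]
    intro hpe
    apply h
    have h1 := mem_antidiagonal.mp hp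
    rw [← hpe] at h1
    exact h1 ▸ le_add_right le_rfl

lemma finsupp_sum_toFinsupp {α : Type*} [DecidableEq α] (S : Finset α) :
    ((S.val.toFinsupp : α →₀ ℕ).sum fun _ e => e) = S.card := by
  have := Finsupp.card_toMultiset (S.val.toFinsupp)
  rw [Multiset.toFinsupp_toMultiset] at this
  exact this.symm

lemma toFinsupp_le_iff {α : Type*} [DecidableEq α] (S : Finset α) (d : α →₀ ℕ) :
    (S.val.toFinsupp : α →₀ ℕ) ≤ d ↔ S ⊆ d.support := by
  rw [Finsupp.le_def]
  constructor
  · intro h a ha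
    rw [Finsupp.mem_support_iff]
    have h2 := h a
    rw [Multiset.toFinsupp_apply] at h2
    have h3 : 1 ≤ Multiset.count a S.val := Multiset.one_le_count_iff_mem.mpr ha
    omega
  · intro h a
    rw [Multiset.toFinsupp_apply]
    by_cases ha : a ∈ S
    · have h1 : Multiset.count a S.val ≤ 1 :=
        Multiset.nodup_iff_count_le_one.mp S.nodup a
      have h2 : d a ≠ 0 := Finsupp.mem_support_iff.mp (h ha)
      omega
    · rw [Multiset.count_eq_zero_of_notMem ha]
      exact Nat.zero_le _

lemma keyK (n : ℕ) (d : Fin n →₀ ℕ) :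
    ∑ p ∈ antidiagonal d, coeff p.1 (cβ n) * β ^ (p.2.sum fun _ e => e)
      = if d = 0 then 1 else 0 := by
  calc ∑ p ∈ antidiagonal d, coeff p.1 (cβ n) * β ^ (p.2.sum fun _ e => e)
      = ∑ p ∈ antidiagonal d, ∑ S ∈ (univ : Finset (Fin n)).powerset,
          (if S.val.toFinsupp = p.1 then (-β) ^ S.card * β ^ (p.2.sum fun _ e => e)
            else 0) := by
        refine Finset.sum_congr rfl fun p _ => ?_
        rw [cβ_expand, coeff_sum, Finset.sum_mul]
        refine Finset.sum_congr rfl fun S _ => ?_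
        rw [coeff_C_mul, coeff_monomial]
        split_ifs <;> ring
    _ = ∑ S ∈ (univ : Finset (Fin n)).powerset,
          (if (S.val.toFinsupp : Fin n →₀ ℕ) ≤ d
            then (-β) ^ S.card * β ^ ((d - S.val.toFinsupp).sum fun _ e => e) else 0) := by
        rw [Finset.sum_comm]
        exact Finset.sum_congr rfl fun S _ => inner_antidiag d S.val.toFinsupp
          (fun f => (-β) ^ S.card * β ^ (f.sum fun _ e => e))
    _ = ∑ S ∈ (univ : Finset (Fin n)).powerset,
          (if S ⊆ d.support then ((-1 : Rβ)) ^ S.card * β ^ (d.sum fun _ e => e)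
            else 0) := by
        refine Finset.sum_congr rfl fun S _ => ?_
        by_cases h : (S.val.toFinsupp : Fin n →₀ ℕ) ≤ d
        · rw [if_pos h, if_pos ((toFinsupp_le_iff S d).mp h)]
          have hD : (d.sum fun _ e => e)
              = S.card + ((d - S.val.toFinsupp).sum fun _ e => e) := by
            conv_lhs => rw [← add_tsub_cancel_of_le h]
            rw [sum_add_fs, finsupp_sum_toFinsupp]
          rw [hD, neg_pow, pow_add]
          ring
        · rw [if_neg h, if_neg (fun hs => h ((toFinsupp_le_iff S d).mpr hs))]
    _ = ∑ S ∈ d.support.powerset, ((-1 : Rβ)) ^ S.card * β ^ (d.sum fun _ e => e) := by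
        rw [← Finset.sum_subset (Finset.powerset_mono.mpr (Finset.subset_univ d.support))
          (fun S _ hS => if_neg (fun h => hS (Finset.mem_powerset.mpr h)))]
        exact Finset.sum_congr rfl fun S hS => if_pos (Finset.mem_powerset.mp hS)
    _ = (if d.support = ∅ then 1 else 0) * β ^ (d.sum fun _ e => e) := by
        have hcast : (∑ S ∈ d.support.powerset, (-1 : Rβ) ^ S.card)
            = if d.support = ∅ then 1 else 0 := by
          have h := Finset.sum_powerset_neg_one_pow_card (x := d.support)
          calc (∑ S ∈ d.support.powerset, (-1 : Rβ) ^ S.card)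
              = ((∑ S ∈ d.support.powerset, (-1 : ℤ) ^ S.card : ℤ) : Rβ) := by
                push_cast; rfl
            _ = _ := by rw [h]; split_ifs <;> simp
        rw [← Finset.sum_mul, hcast]
    _ = if d = 0 then 1 else 0 := by
        by_cases hd : d = 0
        · simp [hd]
        · rw [if_neg hd, if_neg (fun h => hd (Finsupp.support_eq_empty.mp h)), zero_mul]


/-- K-theoretic Segre classes in nonpositive degrees: `G_{-a} = β^a` for all `a ≥ 0`. -/
theorem stmt13 (n a : ℕ) :
    Gcoeff n (-(a : ℤ)) = (MvPowerSeries.C (β ^ a) : MvPowerSeries (Fin n) Rβ) := by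
  funext d
  have hco : (MvPowerSeries.C (σ := Fin n) (β ^ a)) d = if d = 0 then β ^ a else 0 := by
    have h0 : (MvPowerSeries.C (σ := Fin n) (β ^ a)) d
        = MvPowerSeries.coeff d (MvPowerSeries.C (σ := Fin n) (β ^ a)) := rfl
    rw [h0, MvPowerSeries.coeff_C]
  rw [hco]
  simp only [Gcoeff, Int.natAbs_neg, Int.natAbs_natCast]
  set D := d.sum fun _ e => e with hD
  have hlow : ∀ k ∈ Finset.Ico 0 a,
      β ^ k * MvPolynomial.coeff d (bβ n (-(a:ℤ) + k)) = 0 := by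
    intro k hk
    have hk2 : -(a:ℤ) + k < 0 := by
      have := (Finset.mem_Ico.mp hk).2; omega
    rw [bβ, if_pos hk2, MvPolynomial.coeff_zero, mul_zero]
  have hsplit : Finset.range (D + a + 1) = Finset.Ico 0 (a + (D + 1)) := by
    rw [Finset.range_eq_Ico]; congr 1; omega
  rw [hsplit, ← Finset.sum_Ico_consecutive _ (Nat.zero_le a) (Nat.le_add_right a (D + 1)),
    Finset.sum_eq_zero hlow, zero_add, Finset.sum_Ico_eq_sum_range,
    Nat.add_sub_cancel_left]
  have hterm : ∀ l, β ^ (a + l) * MvPolynomial.coeff d (bβ n (-(a:ℤ) + (↑(a + l))))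
      = β ^ a * (β ^ l * MvPolynomial.coeff d (cβ n * hsymm (Fin n) Rβ l)) := by
    intro l
    have h1 : (-(a:ℤ) + (↑(a + l))) = (l : ℤ) := by push_cast; ring
    rw [h1, bβ, if_neg (by omega), hh]
    have h2 : (l : ℤ).toNat = l := Int.toNat_natCast l
    rw [h2, pow_add, mul_assoc]
  rw [Finset.sum_congr rfl (fun l _ => hterm l), ← Finset.mul_sum]
  have hmain : (∑ l ∈ Finset.range (D + 1),
      β ^ l * MvPolynomial.coeff d (cβ n * hsymm (Fin n) Rβ l))
      = if d = 0 then 1 else 0 := by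
    calc (∑ l ∈ Finset.range (D + 1),
        β ^ l * MvPolynomial.coeff d (cβ n * hsymm (Fin n) Rβ l))
        = ∑ l ∈ Finset.range (D + 1), ∑ p ∈ antidiagonal d,
            (if (p.2.sum fun _ e => e) = l
              then β ^ l * MvPolynomial.coeff p.1 (cβ n) else 0) := by
          refine Finset.sum_congr rfl fun l _ => ?_
          rw [MvPolynomial.coeff_mul, Finset.mul_sum]
          refine Finset.sum_congr rfl fun p _ => ?_
          rw [coeff_hsymm]
          split_ifs <;> ring
      _ = ∑ p ∈ antidiagonal d,
            (if (p.2.sum fun _ e => e) ∈ Finset.range (D + 1)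
              then β ^ (p.2.sum fun _ e => e) * MvPolynomial.coeff p.1 (cβ n) else 0) := by
          rw [Finset.sum_comm]
          exact Finset.sum_congr rfl fun p _ =>
            Finset.sum_ite_eq (Finset.range (D + 1)) _
              (fun l => β ^ l * MvPolynomial.coeff p.1 (cβ n))
      _ = ∑ p ∈ antidiagonal d,
            MvPolynomial.coeff p.1 (cβ n) * β ^ (p.2.sum fun _ e => e) := by
          refine Finset.sum_congr rfl fun p hp => ?_
          have h1 := Finset.HasAntidiagonal.mem_antidiagonal.mp hp
          have h2 := sum_add_fs p.1 p.2
          rw [h1, ← hD] at h2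
          have hle : (p.2.sum fun _ e => e) < D + 1 := by omega
          rw [if_pos (Finset.mem_range.mpr hle), mul_comm]
      _ = _ := keyK n d
  rw [hmain]
  split_ifs <;> [rw [mul_one]; rw [mul_zero]]
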